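/- If T is a path with n vertices v_1, v_2, ..., v_n (n ≥ 2), then the number of shellings of T rooted at v_i equals the binomial coefficient C(n-1, i-1). -/

import Mathlib

open SimpleGraph Finset Nat

/-- A set of edges forms a connected (sub)graph: the graph it spans,
induced on its support, is connected. -/
def EdgeSetConnected (V : Type*) (S : Set (Sym2 V)) : Prop :=
  ((SimpleGraph.fromEdgeSet S).induce (SimpleGraph.fromEdgeSet S).support).Connected

/-- A shelling of a graph `G`: an ordering of its edges such that every
initial segment forms a connected subgraph. -/
def IsShelling {V : Type*} (G : SimpleGraph V)
    (σ : Fin (Nat.card G.edgeSet) ≃ G.edgeSet) : Prop :=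
  ∀ k : Fin (Nat.card G.edgeSet),
    EdgeSetConnected V {e | ∃ i, i ≤ k ∧ (σ i : Sym2 V) = e}

/-- The number of shellings of `G`. -/
noncomputable def shellingCount {V : Type*} (G : SimpleGraph V) : ℕ :=
  Nat.card {σ : Fin (Nat.card G.edgeSet) ≃ G.edgeSet // IsShelling G σ}

/-- The number of shellings of `G` rooted at `v`, i.e. whose first edge is incident to `v`. -/
noncomputable def rootedShellingCount {V : Type*} (G : SimpleGraph V) (v : V) : ℕ :=
  Nat.card {σ : Fin (Nat.card G.edgeSet) ≃ G.edgeSet //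
    IsShelling G σ ∧ ∃ h : 0 < Nat.card G.edgeSet, v ∈ (σ ⟨0, h⟩ : Sym2 V)}

/-- The number of vertices of the subtree rooted at `u` when the tree `G` is
rooted at `v`: vertices `w` such that `u` lies on the (unique) path from `v` to `w`. -/
noncomputable def subtreeSize {V : Type*} (G : SimpleGraph V) (v u : V) : ℕ :=
  Nat.card {w : V | ∀ p : G.Path v w, u ∈ (p : G.Walk v w).support}


section PathShelling


variable {n : ℕ}

/-- The `j`-th edge of the path graph. -/
def pe (n : ℕ) (j : Fin (n-1)) : Sym2 (Fin n) :=
  s(⟨j, lt_of_lt_of_le j.2 (Nat.sub_le n 1)⟩,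
    ⟨j+1, by have := j.2; omega⟩)

lemma pe_def (j : Fin (n-1)) : pe n j = s(⟨j, by omega⟩, ⟨j+1, by omega⟩) := rfl

lemma pe_mem (j : Fin (n-1)) : pe n j ∈ (pathGraph n).edgeSet := by
  rw [pe, mem_edgeSet, pathGraph_adj]; left; rfl

lemma pe_inj : Function.Injective (pe n) := by
  intro j k h
  rw [pe, pe, Sym2.eq_iff] at h
  rcases h with ⟨h1, h2⟩ | ⟨h1, h2⟩ <;>
  · have := congrArg Fin.val h1
    have := congrArg Fin.val h2
    simp_all
    omega

lemma pe_surj (e : Sym2 (Fin n)) (he : e ∈ (pathGraph n).edgeSet) :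
    ∃ j, pe n j = e := by
  induction e using Sym2.ind with
  | _ a b =>
    rw [mem_edgeSet, pathGraph_adj] at he
    rcases he with h | h
    · refine ⟨⟨a, by omega⟩, ?_⟩
      rw [pe, Sym2.eq_iff]; left
      exact ⟨Fin.ext rfl, Fin.ext h⟩
    · refine ⟨⟨b, by omega⟩, ?_⟩
      rw [pe, Sym2.eq_iff]; right
      exact ⟨Fin.ext rfl, Fin.ext h⟩

noncomputable def edgeEquiv (n : ℕ) : Fin (n-1) ≃ (pathGraph n).edgeSet :=
  Equiv.ofBijective (fun j => ⟨pe n j, pe_mem j⟩)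
    ⟨fun a b h => pe_inj (Subtype.ext_iff.mp h),
     fun e => (pe_surj e.1 e.2).imp fun j hj => Subtype.ext hj⟩

lemma card_edgeSet_pathGraph (n : ℕ) : Nat.card (pathGraph n).edgeSet = n - 1 := by
  rw [← Nat.card_congr (edgeEquiv n), Nat.card_eq_fintype_card, Fintype.card_fin]

section conn

variable {n : ℕ}


lemma sym2_eq_pe {u v : Fin n} {j : Fin (n-1)} :
    s(u,v) = pe n j ↔ ((u.val = j.val ∧ v.val = j.val+1) ∨ (v.val = j.val ∧ u.val = j.val+1)) := by
  rw [pe, Sym2.eq_iff]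
  constructor
  · rintro (⟨rfl, rfl⟩ | ⟨rfl, rfl⟩) <;> simp
  · rintro (⟨h1, h2⟩ | ⟨h1, h2⟩)
    · left; exact ⟨Fin.ext h1, Fin.ext h2⟩
    · right; exact ⟨Fin.ext h2, Fin.ext h1⟩

lemma adj_fromEdgeSet_pe {T : Set (Fin (n-1))} {u v : Fin n} :
    (fromEdgeSet (pe n '' T)).Adj u v ↔
      ∃ j ∈ T, ((u.val = j.val ∧ v.val = j.val+1) ∨ (v.val = j.val ∧ u.val = j.val+1)) := by
  rw [fromEdgeSet_adj]
  constructor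
  · rintro ⟨⟨j, hj, hje⟩, hne⟩
    exact ⟨j, hj, sym2_eq_pe.mp hje.symm⟩
  · rintro ⟨j, hj, h⟩
    refine ⟨⟨j, hj, (sym2_eq_pe.mpr h).symm⟩, ?_⟩
    rintro rfl
    rcases h with ⟨h1, h2⟩ | ⟨h1, h2⟩ <;> omega

lemma mem_support_pe {T : Set (Fin (n-1))} {v : Fin n} :
    v ∈ (fromEdgeSet (pe n '' T)).support ↔
      ∃ j ∈ T, v.val = j.val ∨ v.val = j.val + 1 := by
  rw [mem_support]
  constructor
  · rintro ⟨w, hw⟩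
    rw [adj_fromEdgeSet_pe] at hw
    obtain ⟨j, hj, h⟩ := hw
    exact ⟨j, hj, by omega⟩
  · rintro ⟨j, hj, h⟩
    have hj1 : (j.val : ℕ) + 1 < n := by have := j.2; omega
    rcases h with h | h
    · exact ⟨⟨j.val+1, hj1⟩, adj_fromEdgeSet_pe.mpr ⟨j, hj, Or.inl ⟨h, rfl⟩⟩⟩
    · exact ⟨⟨j.val, by omega⟩, adj_fromEdgeSet_pe.mpr ⟨j, hj, Or.inr ⟨rfl, h⟩⟩⟩

/-- vertices preserved: adjacency step stays on one side of a missing edge -/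
lemma between_of_connected {T : Set (Fin (n-1))}
    (hc : EdgeSetConnected (Fin n) (pe n '' T)) :
    ∀ a b c : Fin (n-1), a ∈ T → c ∈ T → a ≤ b → b ≤ c → b ∈ T := by
  intro a b c ha hcT hab hbc
  by_contra hb
  set H := fromEdgeSet (pe n '' T) with hH
  have step : ∀ u v : ↥H.support, (H.induce H.support).Adj u v →
      (u.val.val ≤ b.val ↔ v.val.val ≤ b.val) := by
    intro u v huv
    have : H.Adj u.val v.val := huv
    obtain ⟨j, hj, hp⟩ := adj_fromEdgeSet_pe.mp this
    have hjb : j ≠ b := fun h => hb (h ▸ hj)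
    have : j.val ≠ b.val := fun h => hjb (Fin.ext h)
    omega
  have pres : ∀ u v : ↥H.support, (H.induce H.support).Reachable u v →
      (u.val.val ≤ b.val ↔ v.val.val ≤ b.val) := by
    intro u v huv
    obtain ⟨p⟩ := huv
    induction p with
    | nil => rfl
    | cons h p ih => exact (step _ _ h).trans ih
  have hav : (⟨a.val, lt_of_lt_of_le a.2 (Nat.sub_le n 1)⟩ : Fin n) ∈ H.support :=
    mem_support_pe.mpr ⟨a, ha, Or.inl rfl⟩
  have hcv : (⟨c.val + 1, by have := c.2; omega⟩ : Fin n) ∈ H.support :=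
    mem_support_pe.mpr ⟨c, hcT, Or.inr rfl⟩
  have hreach := hc.preconnected ⟨_, hav⟩ ⟨_, hcv⟩
  have := pres _ _ hreach
  simp only at this
  have h1 : a.val ≤ b.val := hab
  have h2 : b.val ≤ c.val := hbc
  have h3 : c.val ≠ b.val := fun h => hb (Fin.ext h ▸ hcT)
  omega

lemma connected_of_interval {T : Set (Fin (n-1))} (hne : T.Nonempty)
    (hT : ∀ a c : Fin (n-1), a ∈ T → c ∈ T → ∀ b : Fin (n-1), a ≤ b → b ≤ c → b ∈ T) :
    EdgeSetConnected (Fin n) (pe n '' T) := by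
  unfold EdgeSetConnected
  obtain ⟨j0, hj0⟩ := hne
  set H := fromEdgeSet (pe n '' T) with hH
  have hvl : ∀ j : Fin (n-1), j ∈ T →
      (⟨j.val, lt_of_lt_of_le j.2 (Nat.sub_le n 1)⟩ : Fin n) ∈ H.support :=
    fun j hj => mem_support_pe.mpr ⟨j, hj, Or.inl rfl⟩
  have hvr : ∀ j : Fin (n-1), j ∈ T →
      (⟨j.val + 1, by have := j.2; omega⟩ : Fin n) ∈ H.support :=
    fun j hj => mem_support_pe.mpr ⟨j, hj, Or.inr rfl⟩
  let vl : ∀ j : Fin (n-1), j ∈ T → ↥H.support := fun j hj => ⟨_, hvl j hj⟩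
  let vr : ∀ j : Fin (n-1), j ∈ T → ↥H.support := fun j hj => ⟨_, hvr j hj⟩
  have adj : ∀ (j : Fin (n-1)) (hj : j ∈ T),
      (H.induce H.support).Adj (vl j hj) (vr j hj) := by
    intro j hj
    show H.Adj _ _
    exact adj_fromEdgeSet_pe.mpr ⟨j, hj, Or.inl ⟨rfl, rfl⟩⟩
  have chain : ∀ d : ℕ, ∀ (j k : Fin (n-1)) (hj : j ∈ T) (hk : k ∈ T), j ≤ k →
      k.val - j.val = d → (H.induce H.support).Reachable (vl j hj) (vl k hk) := by
    intro d
    induction d with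
    | zero =>
      intro j k hj hk hjk hd
      have : j = k := Fin.ext (by have : j.val ≤ k.val := hjk; omega)
      subst this
      rfl
    | succ d ih =>
      intro j k hj hk hjk hd
      have hjk' : j.val < k.val := by have : j.val ≤ k.val := hjk; omega
      have hkpos : 0 < k.val := by omega
      set k' : Fin (n-1) := ⟨k.val - 1, by have := k.2; omega⟩ with hk'
      have hk'T : k' ∈ T := hT j k hj hk k' (show j.val ≤ k.val - 1 by omega)
        (show k.val - 1 ≤ k.val by omega)
      have h1 := ih j k' hj hk'T (show j.val ≤ k.val - 1 by omega)
        (show k.val - 1 - j.val = d by omega)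
      have h2 : vr k' hk'T = vl k hk := by
        apply Subtype.ext; apply Fin.ext
        show k.val - 1 + 1 = k.val
        omega
      exact h1.trans (h2 ▸ (adj k' hk'T).reachable)
  have toL : ∀ u : ↥H.support, ∃ j, ∃ hj : j ∈ T,
      (H.induce H.support).Reachable u (vl j hj) := by
    intro u
    obtain ⟨j, hj, hu⟩ := mem_support_pe.mp u.2
    rcases hu with hu | hu
    · exact ⟨j, hj, by rw [show u = vl j hj from Subtype.ext (Fin.ext hu)]⟩
    · refine ⟨j, hj, ?_⟩
      rw [show u = vr j hj from Subtype.ext (Fin.ext hu)]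
      exact (adj j hj).symm.reachable
  have hne' : Nonempty ↥H.support := ⟨vl j0 hj0⟩
  refine ⟨?_⟩
  intro u w
  obtain ⟨j, hj, hu⟩ := toL u
  obtain ⟨k, hk, hw⟩ := toL w
  have hjk : (H.induce H.support).Reachable (vl j hj) (vl k hk) := by
    rcases le_total j k with h | h
    · exact chain _ j k hj hk h rfl
    · exact (chain _ k j hk hj h rfl).symm
  exact (hu.trans hjk).trans hw.symm

end conn

section defs

variable (n : ℕ)

/-- index of the `t`-th edge in a shelling, as a natural number -/
noncomputable def aSh (σ : Fin (Nat.card (pathGraph n).edgeSet) ≃ (pathGraph n).edgeSet)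
    (t : ℕ) : ℕ :=
  if h : t < Nat.card (pathGraph n).edgeSet then ((edgeEquiv n).symm (σ ⟨t, h⟩)).val else 0

noncomputable def LSh (σ : Fin (Nat.card (pathGraph n).edgeSet) ≃ (pathGraph n).edgeSet)
    (i t : ℕ) : ℕ :=
  ((Finset.range (t+1)).filter (fun s => aSh n σ s < i)).card

noncomputable def RSh (σ : Fin (Nat.card (pathGraph n).edgeSet) ≃ (pathGraph n).edgeSet)
    (i t : ℕ) : ℕ :=
  ((Finset.range (t+1)).filter (fun s => ¬ aSh n σ s < i)).card

def PSh (σ : Fin (Nat.card (pathGraph n).edgeSet) ≃ (pathGraph n).edgeSet)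
    (t : ℕ) : Set ℕ :=
  {x | ∃ s ≤ t, aSh n σ s = x}

end defs

section lems
variable {n : ℕ}
  {σ : Fin (Nat.card (pathGraph n).edgeSet) ≃ (pathGraph n).edgeSet}

lemma edgeEquiv_val (j : Fin (n-1)) :
    ((edgeEquiv n j : (pathGraph n).edgeSet) : Sym2 (Fin n)) = pe n j := rfl

lemma mem_pe {x : Fin n} {j : Fin (n-1)} :
    x ∈ pe n j ↔ x.val = j.val ∨ x.val = j.val + 1 := by
  rw [pe, Sym2.mem_iff]
  constructor
  · rintro (rfl | rfl) <;> simp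
  · rintro (h | h)
    · left; exact Fin.ext h
    · right; exact Fin.ext h

lemma aSh_lt (t : ℕ) (ht : t < Nat.card (pathGraph n).edgeSet) :
    aSh n σ t < n - 1 := by
  rw [aSh, dif_pos ht]
  exact ((edgeEquiv n).symm (σ ⟨t, ht⟩)).2

lemma aSh_inj {s t : ℕ} (hs : s < Nat.card (pathGraph n).edgeSet)
    (ht : t < Nat.card (pathGraph n).edgeSet) (h : aSh n σ s = aSh n σ t) : s = t := by
  rw [aSh, dif_pos hs, aSh, dif_pos ht] at h
  have h2 := (edgeEquiv n).symm.injective (Fin.ext h)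
  have h3 := σ.injective h2
  exact congrArg Fin.val h3

lemma LSh_succ (i t : ℕ) :
    LSh n σ i (t+1) = LSh n σ i t + if aSh n σ (t+1) < i then 1 else 0 := by
  rw [LSh, LSh, Finset.range_add_one, Finset.filter_insert]
  split
  · rw [Finset.card_insert_of_notMem (by simp)]
  · rfl

lemma RSh_succ (i t : ℕ) :
    RSh n σ i (t+1) = RSh n σ i t + if aSh n σ (t+1) < i then 0 else 1 := by
  rw [RSh, RSh, Finset.range_add_one, Finset.filter_insert]
  by_cases h : aSh n σ (t+1) < i
  · rw [if_neg (not_not_intro h), if_pos h]; rfl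
  · rw [if_pos h, if_neg h, Finset.card_insert_of_notMem (by simp)]

lemma LSh_add_RSh (i t : ℕ) : LSh n σ i t + RSh n σ i t = t + 1 := by
  rw [LSh, RSh, Finset.card_filter_add_card_filter_not]
  exact Finset.card_range (t+1)

lemma LSh_le (i : ℕ) (t : ℕ) (ht : t < Nat.card (pathGraph n).edgeSet) :
    LSh n σ i t ≤ i := by
  have : LSh n σ i t ≤ (Finset.range i).card := by
    apply Finset.card_le_card_of_injOn (fun s => aSh n σ s)
    · intro s hs
      simp only [Finset.coe_filter, Finset.coe_range, Finset.mem_coe, Finset.mem_filter, Finset.mem_range, Set.mem_setOf_eq, Set.mem_Iio] at hs ⊢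
      exact hs.2
    · intro s hs u hu h
      simp only [Finset.coe_filter, Finset.mem_range, Set.mem_setOf_eq] at hs hu
      exact aSh_inj (by omega) (by omega) h
  simpa using this

/-- The prefix edge set of a shelling, as the image of an index set. -/
lemma prefix_eq_image (k : Fin (Nat.card (pathGraph n).edgeSet)) :
    {e : Sym2 (Fin n) | ∃ s, s ≤ k ∧ (σ s : Sym2 (Fin n)) = e} =
      pe n '' {j : Fin (n-1) | ∃ s ≤ k.val, aSh n σ s = j.val} := by
  ext e
  constructor
  · rintro ⟨s, hs, rfl⟩
    refine ⟨(edgeEquiv n).symm (σ s), ⟨s.val, hs, ?_⟩, ?_⟩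
    · rw [aSh, dif_pos s.2]
    · rw [← edgeEquiv_val, Equiv.apply_symm_apply]
  · rintro ⟨j, ⟨s, hs, hj⟩, rfl⟩
    have hsm : s < Nat.card (pathGraph n).edgeSet := lt_of_le_of_lt hs k.2
    refine ⟨⟨s, hsm⟩, hs, ?_⟩
    rw [aSh, dif_pos hsm] at hj
    rw [← edgeEquiv_val]
    congr 1
    rw [← Fin.ext hj, Equiv.apply_symm_apply]

lemma PSh_lt {t x : ℕ} (ht : t < Nat.card (pathGraph n).edgeSet)
    (hx : x ∈ PSh n σ t) : x < n - 1 := by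
  obtain ⟨s, hs, rfl⟩ := hx
  exact aSh_lt s (by omega)

lemma shelling_between (hσ : IsShelling (pathGraph n) σ)
    {t : ℕ} (ht : t < Nat.card (pathGraph n).edgeSet) :
    ∀ x y z : ℕ, x ∈ PSh n σ t → z ∈ PSh n σ t → x ≤ y → y ≤ z → y ∈ PSh n σ t := by
  intro x y z hx hz hxy hyz
  have hconn := hσ ⟨t, ht⟩
  rw [show {e : Sym2 (Fin n) | ∃ i, i ≤ (⟨t, ht⟩ : Fin _) ∧ ((σ i : Sym2 (Fin n)) = e)} =
    pe n '' {j : Fin (n-1) | ∃ s ≤ t, aSh n σ s = j.val} from prefix_eq_image ⟨t, ht⟩] at hconn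
  have hbet := between_of_connected hconn
  have hxlt : x < n - 1 := PSh_lt ht hx
  have hzlt : z < n - 1 := PSh_lt ht hz
  obtain ⟨sx, hsx, hax⟩ := hx
  obtain ⟨sz, hsz, haz⟩ := hz
  have := hbet ⟨x, hxlt⟩ ⟨y, by omega⟩ ⟨z, hzlt⟩ ⟨sx, hsx, hax⟩ ⟨sz, hsz, haz⟩ hxy hyz
  exact this

end lems

lemma shelling_key {n : ℕ} (i : Fin n)
    {σ : Fin (Nat.card (pathGraph n).edgeSet) ≃ (pathGraph n).edgeSet}
    (hσ : IsShelling (pathGraph n) σ)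
    (hroot : ∃ h : 0 < Nat.card (pathGraph n).edgeSet,
      (i : Fin n) ∈ (σ ⟨0, h⟩ : Sym2 (Fin n))) :
    ∀ t, t < Nat.card (pathGraph n).edgeSet →
      (PSh n σ t = Set.Icc (i.val - LSh n σ i.val t) (i.val + RSh n σ i.val t - 1)) ∧
      (aSh n σ t = if aSh n σ t < i.val then i.val - LSh n σ i.val t
        else i.val + RSh n σ i.val t - 1) := by
  intro t
  induction t with
  | zero =>
    intro ht
    obtain ⟨h0, hri⟩ := hroot
    have hmem : i ∈ pe n ((edgeEquiv n).symm (σ ⟨0, h0⟩)) := by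
      rw [← edgeEquiv_val, Equiv.apply_symm_apply]; exact hri
    rw [mem_pe] at hmem
    have ha0 : aSh n σ 0 = ((edgeEquiv n).symm (σ ⟨0, h0⟩)).val := by
      rw [aSh, dif_pos h0]
    rw [← ha0] at hmem
    have hL0 : LSh n σ i.val 0 = if aSh n σ 0 < i.val then 1 else 0 := by
      rw [LSh]
      simp only [Nat.zero_add, Finset.range_one, Finset.filter_singleton]
      split <;> simp
    have hR0 : RSh n σ i.val 0 = if aSh n σ 0 < i.val then 0 else 1 := by
      rw [RSh]
      simp only [Nat.zero_add, Finset.range_one, Finset.filter_singleton]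
      split <;> simp_all
    have hP0 : PSh n σ 0 = {aSh n σ 0} := by
      ext x
      simp only [PSh, Set.mem_setOf_eq, Set.mem_singleton_iff]
      constructor
      · rintro ⟨s, hs, rfl⟩
        rw [Nat.le_zero.mp hs]
      · rintro rfl; exact ⟨0, le_refl 0, rfl⟩
    rcases hmem with hmem | hmem
    · have hlt : ¬ aSh n σ 0 < i.val := by omega
      rw [hP0, hL0, hR0, if_neg hlt, if_neg hlt, if_neg hlt]
      constructor
      · ext x
        simp only [Set.mem_singleton_iff, Set.mem_Icc]
        omega
      · omega
    · have hlt : aSh n σ 0 < i.val := by omega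
      rw [hP0, hL0, hR0, if_pos hlt, if_pos hlt, if_pos hlt]
      constructor
      · ext x
        simp only [Set.mem_singleton_iff, Set.mem_Icc]
        omega
      · omega
  | succ t IH =>
    intro ht1
    have ht : t < Nat.card (pathGraph n).edgeSet := by omega
    obtain ⟨hPt, _⟩ := IH ht
    set b := aSh n σ (t+1) with hb
    have hbP : PSh n σ (t+1) = PSh n σ t ∪ {b} := by
      ext x
      simp only [PSh, Set.mem_setOf_eq, Set.mem_union, Set.mem_singleton_iff]
      constructor
      · rintro ⟨s, hs, rfl⟩
        rcases Nat.lt_or_ge s (t+1) with h | h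
        · exact Or.inl ⟨s, by omega, rfl⟩
        · right; rw [hb]; congr 1; omega
      · rintro (⟨s, hs, rfl⟩ | rfl)
        · exact ⟨s, by omega, rfl⟩
        · exact ⟨t+1, le_refl _, rfl⟩
    have hbnot : b ∉ PSh n σ t := by
      rintro ⟨s, hs, hbs⟩
      have := aSh_inj (σ := σ) (by omega : s < Nat.card (pathGraph n).edgeSet) ht1 hbs
      omega
    have hLle : LSh n σ i.val t ≤ i.val := LSh_le i.val t ht
    have hLR : LSh n σ i.val t + RSh n σ i.val t = t + 1 := LSh_add_RSh i.val t
    have h0P : aSh n σ 0 ∈ PSh n σ t := ⟨0, Nat.zero_le t, rfl⟩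
    have hlohi : i.val - LSh n σ i.val t ≤ i.val + RSh n σ i.val t - 1 := by
      rw [hPt] at h0P
      obtain ⟨h1, h2⟩ := Set.mem_Icc.mp h0P
      omega
    have hbI : b ∈ PSh n σ (t+1) := ⟨t+1, le_refl _, rfl⟩
    have hsub : PSh n σ t ⊆ PSh n σ (t+1) := by
      rw [hbP]; exact Set.subset_union_left
    have hbt := shelling_between hσ ht1
    have hbnotI : ¬ (i.val - LSh n σ i.val t ≤ b ∧ b ≤ i.val + RSh n σ i.val t - 1) := by
      intro h
      exact hbnot (hPt ▸ Set.mem_Icc.mpr h)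
    have hcases : b < i.val - LSh n σ i.val t ∨ i.val + RSh n σ i.val t - 1 < b := by omega
    rcases hcases with hcase | hcase
    · -- new edge extends to the left
      have hhiP : (i.val + RSh n σ i.val t - 1) ∈ PSh n σ (t+1) :=
        hsub (hPt ▸ Set.mem_Icc.mpr ⟨hlohi, le_refl _⟩)
      have hy : (i.val - LSh n σ i.val t - 1) ∈ PSh n σ (t+1) :=
        hbt b _ _ hbI hhiP (by omega) (by omega)
      have hblo : b = i.val - LSh n σ i.val t - 1 := by
        rw [hbP] at hy
        rcases hy with hy | hy
        · exfalso
          rw [hPt] at hy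
          obtain ⟨h1, h2⟩ := Set.mem_Icc.mp hy
          omega
        · exact hy.symm
      have hbi : b < i.val := by omega
      have hL1 : LSh n σ i.val (t+1) = LSh n σ i.val t + 1 := by
        rw [LSh_succ, ← hb, if_pos hbi]
      have hR1 : RSh n σ i.val (t+1) = RSh n σ i.val t := by
        rw [RSh_succ, ← hb, if_pos hbi, Nat.add_zero]
      constructor
      · rw [hbP, hPt, hL1, hR1]
        ext x
        simp only [Set.mem_union, Set.mem_Icc, Set.mem_singleton_iff]
        omega
      · rw [hL1, if_pos hbi]
        omega
    · -- new edge extends to the right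
      have hloP : (i.val - LSh n σ i.val t) ∈ PSh n σ (t+1) :=
        hsub (hPt ▸ Set.mem_Icc.mpr ⟨le_refl _, hlohi⟩)
      have hy : (i.val + RSh n σ i.val t - 1 + 1) ∈ PSh n σ (t+1) :=
        hbt _ _ b hloP hbI (by omega) (by omega)
      have hiR1 : 1 ≤ i.val + RSh n σ i.val t := by
        rcases Nat.eq_zero_or_pos i.val with h | h
        · omega
        · omega
      have hbhi : b = i.val + RSh n σ i.val t := by
        rw [hbP] at hy
        rcases hy with hy | hy
        · exfalso
          rw [hPt] at hy
          obtain ⟨h1, h2⟩ := Set.mem_Icc.mp hy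
          omega
        · rw [Set.mem_singleton_iff] at hy
          omega
      have hbi : ¬ b < i.val := by omega
      have hL1 : LSh n σ i.val (t+1) = LSh n σ i.val t := by
        rw [LSh_succ, ← hb, if_neg hbi, Nat.add_zero]
      have hR1 : RSh n σ i.val (t+1) = RSh n σ i.val t + 1 := by
        rw [RSh_succ, ← hb, if_neg hbi]
      constructor
      · rw [hbP, hPt, hL1, hR1]
        ext x
        simp only [Set.mem_union, Set.mem_Icc, Set.mem_singleton_iff]
        omega
      · rw [hL1, hR1, if_neg hbi]
        omega

section Fdir
variable {n : ℕ}

variable (n) in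
noncomputable def cA (A : Finset (Fin (Nat.card (pathGraph n).edgeSet))) (t : ℕ) : ℕ :=
  (A.filter (fun s => s.val ≤ t)).card

variable (n) in
noncomputable def gA (i : ℕ) (A : Finset (Fin (Nat.card (pathGraph n).edgeSet))) (t : ℕ) : ℕ :=
  if h : t < Nat.card (pathGraph n).edgeSet then
    (if (⟨t, h⟩ : Fin (Nat.card (pathGraph n).edgeSet)) ∈ A then i - cA n A t
     else i + cA n Aᶜ t - 1)
  else 0

variable {A : Finset (Fin (Nat.card (pathGraph n).edgeSet))}

lemma cA_le_card (t : ℕ) : cA n A t ≤ A.card :=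
  Finset.card_le_card (Finset.filter_subset _ _)

lemma cA_pos {t : ℕ} (h : t < Nat.card (pathGraph n).edgeSet)
    (hA : (⟨t, h⟩ : Fin _) ∈ A) : 1 ≤ cA n A t := by
  rw [cA]
  exact Finset.card_pos.mpr ⟨⟨t, h⟩, Finset.mem_filter.mpr ⟨hA, le_refl t⟩⟩

lemma cA_strict {s t : ℕ} (hst : s < t) (h : t < Nat.card (pathGraph n).edgeSet)
    (hA : (⟨t, h⟩ : Fin _) ∈ A) : cA n A s < cA n A t := by
  have hins : insert (⟨t, h⟩ : Fin _) (A.filter (fun x => x.val ≤ s)) ⊆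
      A.filter (fun x => x.val ≤ t) := by
    intro x hx
    rcases Finset.mem_insert.mp hx with rfl | hx
    · exact Finset.mem_filter.mpr ⟨hA, le_refl t⟩
    · obtain ⟨h1, h2⟩ := Finset.mem_filter.mp hx
      exact Finset.mem_filter.mpr ⟨h1, by omega⟩
  have hc := Finset.card_le_card hins
  rw [Finset.card_insert_of_notMem (by
    intro hx
    have h2 : t ≤ s := (Finset.mem_filter.mp hx).2
    omega)] at hc
  rw [cA, cA]
  omega

lemma cA_succ (t : ℕ) :
    cA n A (t+1) = cA n A t +
      (if h : t+1 < Nat.card (pathGraph n).edgeSet then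
        (if (⟨t+1, h⟩ : Fin _) ∈ A then 1 else 0) else 0) := by
  by_cases h : t+1 < Nat.card (pathGraph n).edgeSet
  · rw [dif_pos h]
    by_cases hm : (⟨t+1, h⟩ : Fin _) ∈ A
    · rw [if_pos hm]
      have he : A.filter (fun s => s.val ≤ t+1) =
          insert (⟨t+1,h⟩ : Fin _) (A.filter (fun s => s.val ≤ t)) := by
        ext x
        simp only [Finset.mem_filter, Finset.mem_insert]
        constructor
        · rintro ⟨h1, h2⟩
          rcases Nat.lt_or_ge x.val (t+1) with h3 | h3
          · exact Or.inr ⟨h1, by omega⟩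
          · exact Or.inl (Fin.ext (show x.val = t+1 by omega))
        · rintro (rfl | ⟨h1, h2⟩)
          · exact ⟨hm, le_refl _⟩
          · exact ⟨h1, by omega⟩
      rw [cA, cA, he, Finset.card_insert_of_notMem (by
        intro hx
        have h2 : t + 1 ≤ t := (Finset.mem_filter.mp hx).2
        omega)]
    · rw [if_neg hm, Nat.add_zero, cA, cA]
      congr 1
      ext x
      simp only [Finset.mem_filter]
      constructor
      · rintro ⟨h1, h2⟩
        refine ⟨h1, ?_⟩
        rcases Nat.lt_or_ge x.val (t+1) with h3 | h3
        · omega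
        · exfalso
          have hx : x = ⟨t+1, h⟩ := Fin.ext (show x.val = t+1 by omega)
          exact hm (hx ▸ h1)
      · rintro ⟨h1, h2⟩
        exact ⟨h1, by omega⟩
  · rw [dif_neg h, Nat.add_zero, cA, cA]
    congr 1
    ext x
    simp only [Finset.mem_filter]
    have hx2 : x.val < Nat.card (pathGraph n).edgeSet := x.2
    constructor
    · rintro ⟨h1, h2⟩; exact ⟨h1, by omega⟩
    · rintro ⟨h1, h2⟩; exact ⟨h1, by omega⟩

lemma card_filter_le_univ (t : ℕ) (h : t < Nat.card (pathGraph n).edgeSet) :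
    ((Finset.univ : Finset (Fin (Nat.card (pathGraph n).edgeSet))).filter
      (fun s => s.val ≤ t)).card = t + 1 := by
  rw [← Finset.card_range (t+1)]
  apply Finset.card_bij (fun s _ => s.val)
  · intro a ha
    have h2 : a.val ≤ t := (Finset.mem_filter.mp ha).2
    rw [Finset.mem_range]
    omega
  · intro a ha b hb hab
    exact Fin.ext hab
  · intro b hb
    have hb' : b < t+1 := Finset.mem_range.mp hb
    exact ⟨⟨b, by omega⟩, Finset.mem_filter.mpr ⟨Finset.mem_univ _, show b ≤ t by omega⟩, rfl⟩

lemma cA_compl_sum {t : ℕ} (h : t < Nat.card (pathGraph n).edgeSet) :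
    cA n A t + cA n Aᶜ t = t + 1 := by
  rw [cA, cA, ← Finset.card_union_of_disjoint (by
    apply Finset.disjoint_filter_filter
    exact disjoint_compl_right)]
  rw [← Finset.filter_union, Finset.union_compl]
  exact card_filter_le_univ t h

end Fdir

section Glem
variable {n : ℕ} {i : ℕ} {A : Finset (Fin (Nat.card (pathGraph n).edgeSet))}

lemma gA_pos_def {t : ℕ} (h : t < Nat.card (pathGraph n).edgeSet) :
    gA n i A t = if (⟨t, h⟩ : Fin _) ∈ A then i - cA n A t
      else i + cA n Aᶜ t - 1 := by
  rw [gA, dif_pos h]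

lemma card_compl_A (hA : A.card = i) :
    Aᶜ.card = Nat.card (pathGraph n).edgeSet - i := by
  rw [Finset.card_compl, hA, Fintype.card_fin]

lemma gA_lt (hn : 2 ≤ n) (hi : i ≤ n - 1) (hA : A.card = i)
    {t : ℕ} (ht : t < Nat.card (pathGraph n).edgeSet) :
    gA n i A t < n - 1 := by
  have hm : Nat.card (pathGraph n).edgeSet = n - 1 := card_edgeSet_pathGraph n
  rw [gA_pos_def ht]
  split_ifs with hmem
  · have h1 := cA_pos ht hmem
    have h2 : cA n A t ≤ i := hA ▸ cA_le_card t
    omega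
  · have h1 := cA_pos ht (Finset.mem_compl.mpr hmem)
    have h2 : cA n Aᶜ t ≤ Nat.card (pathGraph n).edgeSet - i :=
      card_compl_A hA ▸ cA_le_card t
    omega

lemma gA_lt_iff (hA : A.card = i) {t : ℕ} (ht : t < Nat.card (pathGraph n).edgeSet) :
    (gA n i A t < i ↔ (⟨t, ht⟩ : Fin _) ∈ A) := by
  rw [gA_pos_def ht]
  split_ifs with hmem
  · have h1 := cA_pos ht hmem
    have h2 : cA n A t ≤ i := hA ▸ cA_le_card t
    simp only [hmem, iff_true]
    omega
  · have h1 := cA_pos ht (Finset.mem_compl.mpr hmem)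
    simp only [hmem, iff_false]
    omega

lemma gA_inj (hA : A.card = i) {s t : ℕ}
    (hs : s < Nat.card (pathGraph n).edgeSet) (ht : t < Nat.card (pathGraph n).edgeSet)
    (h : gA n i A s = gA n i A t) : s = t := by
  by_contra hne
  -- wlog s < t
  wlog hst : s < t generalizing s t
  · exact this ht hs h.symm (Ne.symm hne) (by omega)
  rw [gA_pos_def hs, gA_pos_def ht] at h
  by_cases hmt : (⟨t, ht⟩ : Fin _) ∈ A <;> by_cases hms : (⟨s, hs⟩ : Fin _) ∈ A
  · rw [if_pos hmt, if_pos hms] at h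
    have h1 := cA_strict hst ht hmt
    have h2 : cA n A t ≤ i := hA ▸ cA_le_card t
    have h3 := cA_pos hs hms
    omega
  · rw [if_pos hmt, if_neg hms] at h
    have h1 := cA_pos hs (Finset.mem_compl.mpr hms)
    have h2 : cA n A t ≤ i := hA ▸ cA_le_card t
    have h3 := cA_pos ht hmt
    omega
  · rw [if_neg hmt, if_pos hms] at h
    have h1 := cA_pos ht (Finset.mem_compl.mpr hmt)
    have h2 : cA n A s ≤ i := hA ▸ cA_le_card s
    have h3 := cA_pos hs hms
    omega
  · rw [if_neg hmt, if_neg hms] at h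
    have h1 := cA_strict hst ht (Finset.mem_compl.mpr hmt)
    have h3 := cA_pos hs (Finset.mem_compl.mpr hms)
    omega

lemma gA_valueset (hA : A.card = i) :
    ∀ t, t < Nat.card (pathGraph n).edgeSet →
      {x : ℕ | ∃ s ≤ t, gA n i A s = x} =
        Set.Icc (i - cA n A t) (i + cA n Aᶜ t - 1) := by
  intro t
  induction t with
  | zero =>
    intro ht
    have hset : {x : ℕ | ∃ s ≤ 0, gA n i A s = x} = {gA n i A 0} := by
      ext x
      simp only [Set.mem_setOf_eq, Set.mem_singleton_iff]
      constructor
      · rintro ⟨s, hs, rfl⟩; rw [Nat.le_zero.mp hs]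
      · rintro rfl; exact ⟨0, le_refl _, rfl⟩
    rw [hset, gA_pos_def ht]
    have hsum := cA_compl_sum (A := A) ht
    by_cases hm : (⟨0, ht⟩ : Fin _) ∈ A
    · have h1 := cA_pos ht hm
      have h2 : cA n A 0 ≤ i := hA ▸ cA_le_card 0
      rw [if_pos hm]
      ext x
      simp only [Set.mem_singleton_iff, Set.mem_Icc]
      omega
    · have h1 := cA_pos ht (Finset.mem_compl.mpr hm)
      rw [if_neg hm]
      ext x
      simp only [Set.mem_singleton_iff, Set.mem_Icc]
      omega
  | succ t IH =>
    intro ht1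
    have ht : t < Nat.card (pathGraph n).edgeSet := by omega
    have hset := IH ht
    have hsucc : {x : ℕ | ∃ s ≤ t+1, gA n i A s = x} =
        {x : ℕ | ∃ s ≤ t, gA n i A s = x} ∪ {gA n i A (t+1)} := by
      ext x
      simp only [Set.mem_setOf_eq, Set.mem_union, Set.mem_singleton_iff]
      constructor
      · rintro ⟨s, hs, rfl⟩
        rcases Nat.lt_or_ge s (t+1) with h | h
        · exact Or.inl ⟨s, by omega, rfl⟩
        · right; congr 1; omega
      · rintro (⟨s, hs, rfl⟩ | rfl)
        · exact ⟨s, by omega, rfl⟩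
        · exact ⟨t+1, le_refl _, rfl⟩
    have hAsucc := cA_succ (A := A) t
    have hBsucc := cA_succ (A := Aᶜ) t
    rw [dif_pos ht1] at hAsucc hBsucc
    have hsum := cA_compl_sum (A := A) ht
    have hsum1 := cA_compl_sum (A := A) ht1
    have hle : cA n A (t+1) ≤ i := hA ▸ cA_le_card (t+1)
    have hle0 : cA n A t ≤ i := hA ▸ cA_le_card t
    rw [hsucc, hset, gA_pos_def ht1]
    by_cases hm : (⟨t+1, ht1⟩ : Fin _) ∈ A
    · rw [if_pos hm] at *;
      simp only [Finset.mem_compl, hm, not_true_eq_false, if_false, Nat.add_zero] at hBsucc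
      have h1 := cA_pos ht1 hm
      ext x
      simp only [Set.mem_union, Set.mem_Icc, Set.mem_singleton_iff]
      omega
    · rw [if_neg hm] at *;
      simp only [Finset.mem_compl, hm, not_false_eq_true, if_true] at hBsucc
      have h1 := cA_pos ht1 (Finset.mem_compl.mpr hm)
      ext x
      simp only [Set.mem_union, Set.mem_Icc, Set.mem_singleton_iff]
      omega

end Glem

section Final
variable {n : ℕ}

lemma exists_shelling (hn : 2 ≤ n) (i : Fin n)
    (A : Finset (Fin (Nat.card (pathGraph n).edgeSet))) (hA : A.card = i.val) :
    ∃ σ : Fin (Nat.card (pathGraph n).edgeSet) ≃ (pathGraph n).edgeSet,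
      (IsShelling (pathGraph n) σ ∧ ∃ h : 0 < Nat.card (pathGraph n).edgeSet,
        (i : Fin n) ∈ (σ ⟨0, h⟩ : Sym2 (Fin n))) ∧
      ∀ t, t < Nat.card (pathGraph n).edgeSet → aSh n σ t = gA n i.val A t := by
  have hm : Nat.card (pathGraph n).edgeSet = n - 1 := card_edgeSet_pathGraph n
  have hi : i.val ≤ n - 1 := by have := i.2; omega
  have hgl : ∀ t : Fin (Nat.card (pathGraph n).edgeSet), gA n i.val A t.val < n - 1 :=
    fun t => gA_lt hn hi hA t.2
  let f : Fin (Nat.card (pathGraph n).edgeSet) → Fin (Nat.card (pathGraph n).edgeSet) :=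
    fun t => ⟨gA n i.val A t.val, by have := hgl t; omega⟩
  have hfinj : Function.Injective f := by
    intro s t h
    have h2 := congrArg Fin.val h
    exact Fin.ext (gA_inj hA s.2 t.2 h2)
  have hfbij := Finite.injective_iff_bijective.mp hfinj
  let σ := (Equiv.ofBijective f hfbij).trans ((finCongr hm).trans (edgeEquiv n))
  have hσa : ∀ t, t < Nat.card (pathGraph n).edgeSet → aSh n σ t = gA n i.val A t := by
    intro t ht
    rw [aSh, dif_pos ht]
    show ((edgeEquiv n).symm (edgeEquiv n (finCongr hm (f ⟨t, ht⟩)))).val = _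
    rw [Equiv.symm_apply_apply]
    rfl
  refine ⟨σ, ⟨?_, ?_⟩, hσa⟩
  · intro k
    rw [show {e : Sym2 (Fin n) | ∃ s, s ≤ k ∧ ((σ s : Sym2 (Fin n)) = e)} =
      pe n '' {j : Fin (n-1) | ∃ s ≤ k.val, aSh n σ s = j.val} from prefix_eq_image k]
    have hvs := gA_valueset hA k.val k.2
    apply connected_of_interval
    · exact ⟨⟨aSh n σ 0, aSh_lt 0 (by omega)⟩, 0, Nat.zero_le _, rfl⟩
    · intro a c haT hcT b hab hbc
      obtain ⟨sa, hsa, ha⟩ := haT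
      obtain ⟨sc, hsc, hc⟩ := hcT
      have ha' : a.val ∈ Set.Icc (i.val - cA n A k.val) (i.val + cA n Aᶜ k.val - 1) := by
        rw [← hvs]
        exact ⟨sa, hsa, by rw [← hσa sa (by omega)]; exact ha⟩
      have hc' : c.val ∈ Set.Icc (i.val - cA n A k.val) (i.val + cA n Aᶜ k.val - 1) := by
        rw [← hvs]
        exact ⟨sc, hsc, by rw [← hσa sc (by omega)]; exact hc⟩
      have hb' : b.val ∈ Set.Icc (i.val - cA n A k.val) (i.val + cA n Aᶜ k.val - 1) := by
        obtain ⟨ha1, ha2⟩ := Set.mem_Icc.mp ha'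
        obtain ⟨hc1, hc2⟩ := Set.mem_Icc.mp hc'
        have hab' : a.val ≤ b.val := hab
        have hbc' : b.val ≤ c.val := hbc
        exact Set.mem_Icc.mpr ⟨by omega, by omega⟩
      rw [← hvs] at hb'
      obtain ⟨s, hs, hgs⟩ := hb'
      exact ⟨s, hs, by rw [hσa s (by omega)]; exact hgs⟩
  · have h0 : 0 < Nat.card (pathGraph n).edgeSet := by omega
    refine ⟨h0, ?_⟩
    have hσ0 : (σ ⟨0, h0⟩ : Sym2 (Fin n)) = pe n ⟨gA n i.val A 0, gA_lt hn hi hA h0⟩ := by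
      show (edgeEquiv n (finCongr hm (f ⟨0, h0⟩)) : Sym2 (Fin n)) = _
      rw [edgeEquiv_val]
      congr 1
    rw [hσ0, mem_pe]
    show i.val = gA n i.val A 0 ∨ i.val = gA n i.val A 0 + 1
    rw [gA_pos_def h0]
    have hsum := cA_compl_sum (A := A) h0
    by_cases hm0 : (⟨0, h0⟩ : Fin _) ∈ A
    · rw [if_pos hm0]
      have h1 := cA_pos h0 hm0
      have h2 : cA n A 0 ≤ i.val := hA ▸ cA_le_card 0
      right; omega
    · rw [if_neg hm0]
      have h1 := cA_pos h0 (Finset.mem_compl.mpr hm0)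
      left; omega

lemma aSh_eq_val {σ : Fin (Nat.card (pathGraph n).edgeSet) ≃ (pathGraph n).edgeSet}
    (t : Fin (Nat.card (pathGraph n).edgeSet)) :
    aSh n σ t.val = ((edgeEquiv n).symm (σ t)).val := by
  rw [aSh, dif_pos t.2]

lemma filter_aSh_card (hn : 2 ≤ n) (i : Fin n)
    (σ : Fin (Nat.card (pathGraph n).edgeSet) ≃ (pathGraph n).edgeSet) :
    (Finset.univ.filter
      (fun t : Fin (Nat.card (pathGraph n).edgeSet) => aSh n σ t.val < i.val)).card
        = i.val := by
  have hm : Nat.card (pathGraph n).edgeSet = n - 1 := card_edgeSet_pathGraph n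
  have hi : i.val ≤ n - 1 := by have := i.2; omega
  have key : (Finset.univ.filter
      (fun t : Fin (Nat.card (pathGraph n).edgeSet) => aSh n σ t.val < i.val)).card
        = (Finset.range i.val).card := by
    apply Finset.card_bij (fun t _ => aSh n σ t.val)
    · intro t ht
      rw [Finset.mem_range]
      exact (Finset.mem_filter.mp ht).2
    · intro t1 h1 t2 h2 h
      exact Fin.ext (aSh_inj t1.2 t2.2 h)
    · intro x hx
      have hx' : x < i.val := Finset.mem_range.mp hx
      have hxn : x < n - 1 := by omega
      refine ⟨σ.symm (edgeEquiv n ⟨x, hxn⟩), ?_, ?_⟩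
      · apply Finset.mem_filter.mpr
        refine ⟨Finset.mem_univ _, ?_⟩
        rw [aSh_eq_val, Equiv.apply_symm_apply, Equiv.symm_apply_apply]
        exact hx'
      · rw [aSh_eq_val, Equiv.apply_symm_apply, Equiv.symm_apply_apply]
  rw [key, Finset.card_range]

end Final

end PathShelling

set_option maxHeartbeats 1000000 in
/-- For the path with `n ≥ 2` vertices `v_0, …, v_{n-1}`, the number of shellings
rooted at `v_i` is `C(n-1, i)`. -/
theorem rootedShellingCount_pathGraph (n : ℕ) (hn : 2 ≤ n) (i : Fin n) :
    rootedShellingCount (pathGraph n) i = (n - 1).choose i.val := by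
  classical
  have hm : Nat.card (pathGraph n).edgeSet = n - 1 := card_edgeSet_pathGraph n
  have hi : i.val ≤ n - 1 := by have := i.2; omega
  rw [rootedShellingCount]
  have h1 : Nat.card {σ : Fin (Nat.card (pathGraph n).edgeSet) ≃ (pathGraph n).edgeSet //
      IsShelling (pathGraph n) σ ∧ ∃ h : 0 < Nat.card (pathGraph n).edgeSet,
        (i : Fin n) ∈ (σ ⟨0, h⟩ : Sym2 (Fin n))} ≤
      Nat.card {A : Finset (Fin (Nat.card (pathGraph n).edgeSet)) // A.card = i.val} := by
    apply Nat.card_le_card_of_injective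
      (fun σp => (⟨Finset.univ.filter (fun t => aSh n σp.val t.val < i.val),
        filter_aSh_card hn i σp.val⟩ :
          {A : Finset (Fin (Nat.card (pathGraph n).edgeSet)) // A.card = i.val}))
    rintro ⟨σ, hσ, hroot⟩ ⟨σ', hσ', hroot'⟩ h
    have hfil : Finset.univ.filter
        (fun t : Fin (Nat.card (pathGraph n).edgeSet) => aSh n σ t.val < i.val) =
        Finset.univ.filter (fun t => aSh n σ' t.val < i.val) :=
      congrArg Subtype.val h
    have hiff : ∀ s, s < Nat.card (pathGraph n).edgeSet →
        (aSh n σ s < i.val ↔ aSh n σ' s < i.val) := by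
      intro s hs
      have := Finset.ext_iff.mp hfil ⟨s, hs⟩
      simp only [Finset.mem_filter, Finset.mem_univ, true_and] at this
      exact this
    apply Subtype.ext
    apply Equiv.ext
    intro t
    have hL : LSh n σ i.val t.val = LSh n σ' i.val t.val := by
      rw [LSh, LSh]
      congr 1
      apply Finset.filter_congr
      intro s hs
      have hs' : s < Nat.card (pathGraph n).edgeSet := by
        have := Finset.mem_range.mp hs
        have := t.2
        omega
      simp only [hiff s hs']
    have hR : RSh n σ i.val t.val = RSh n σ' i.val t.val := by
      rw [RSh, RSh]
      congr 1
      apply Finset.filter_congr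
      intro s hs
      have hs' : s < Nat.card (pathGraph n).edgeSet := by
        have := Finset.mem_range.mp hs
        have := t.2
        omega
      simp only [hiff s hs']
    have k1 := (shelling_key i hσ hroot t.val t.2).2
    have k2 := (shelling_key i hσ' hroot' t.val t.2).2
    have haa : aSh n σ t.val = aSh n σ' t.val := by
      by_cases hc : aSh n σ t.val < i.val
      · rw [if_pos hc] at k1
        rw [if_pos ((hiff t.val t.2).mp hc)] at k2
        rw [k1, k2, hL]
      · rw [if_neg hc] at k1
        rw [if_neg (fun hc2 => hc ((hiff t.val t.2).mpr hc2))] at k2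
        rw [k1, k2, hR]
    rw [aSh_eq_val t, aSh_eq_val t] at haa
    have := (edgeEquiv n).symm.injective (Fin.ext haa)
    calc σ t = edgeEquiv n ((edgeEquiv n).symm (σ t)) := by rw [Equiv.apply_symm_apply]
    _ = edgeEquiv n ((edgeEquiv n).symm (σ' t)) := by rw [this]
    _ = σ' t := by rw [Equiv.apply_symm_apply]
  have h2 : Nat.card {A : Finset (Fin (Nat.card (pathGraph n).edgeSet)) // A.card = i.val} ≤
      Nat.card {σ : Fin (Nat.card (pathGraph n).edgeSet) ≃ (pathGraph n).edgeSet //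
        IsShelling (pathGraph n) σ ∧ ∃ h : 0 < Nat.card (pathGraph n).edgeSet,
          (i : Fin n) ∈ (σ ⟨0, h⟩ : Sym2 (Fin n))} := by
    have hF : ∀ Ap : {A : Finset (Fin (Nat.card (pathGraph n).edgeSet)) // A.card = i.val},
        ∃ σp : {σ : Fin (Nat.card (pathGraph n).edgeSet) ≃ (pathGraph n).edgeSet //
          IsShelling (pathGraph n) σ ∧ ∃ h : 0 < Nat.card (pathGraph n).edgeSet,
            (i : Fin n) ∈ (σ ⟨0, h⟩ : Sym2 (Fin n))},
          ∀ t, t < Nat.card (pathGraph n).edgeSet →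
            aSh n σp.val t = gA n i.val Ap.val t := by
      intro Ap
      obtain ⟨σ, hP, hspec⟩ := exists_shelling hn i Ap.val Ap.2
      exact ⟨⟨σ, hP⟩, hspec⟩
    apply Nat.card_le_card_of_injective (fun Ap => (hF Ap).choose)
    intro Ap Ap' heq
    have heq' : (hF Ap).choose = (hF Ap').choose := heq
    have s1 := (hF Ap).choose_spec
    have s2 := (hF Ap').choose_spec
    rw [heq'] at s1
    apply Subtype.ext
    apply Finset.ext
    intro t
    have e1 : gA n i.val Ap.val t.val = gA n i.val Ap'.val t.val := by
      rw [← s1 t.val t.2, ← s2 t.val t.2]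
    have g1 := gA_lt_iff Ap.2 t.2
    have g2 := gA_lt_iff Ap'.2 t.2
    constructor
    · intro h
      exact g2.mp (e1 ▸ g1.mpr h)
    · intro h
      exact g1.mp (e1 ▸ g2.mpr h)
  have h3 : Nat.card {A : Finset (Fin (Nat.card (pathGraph n).edgeSet)) // A.card = i.val} =
      (n - 1).choose i.val := by
    rw [Nat.card_eq_fintype_card, Fintype.card_finset_len, Fintype.card_fin, hm]
  omega
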